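/- Suppose σ has finite order n with n < m−1, σ commutes with every τ ∈ Aut_F(K), and f(t) = t^m − Σ_{i=0}^{m−1} a_i t^i ∈ K[t;σ] is monic of degree m and not invariant. Then for every τ ∈ Aut_F(K) and k ∈ K^× satisfying τ(a_i) = (∏_{l=i}^{m−1} σ^l(k))·a_i for all i ∈ {0,…,m−1}, the map H_{τ,k} is an F-algebra automorphism of S_f; these maps form a subgroup of Aut_F(S_f), with composition H_{τ,k} ∘ H_{ρ,b} = H_{τρ, τ(b)k} and inverse H_{τ,k}^{−1} = H_{τ^{−1}, τ^{−1}(k^{−1})}. -/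

import Mathlib

/-! ## The Petit algebra `S_f = K[t;σ]/K[t;σ]f`

For a twisted polynomial ring `R = K[t;σ]` (multiplication determined by `t·a = σ(a)·t`)
and the monic skew polynomial `f(t) = t^m - Σ_{i<m} a_i t^i` (encoded by its coefficient
vector `a : Fin m → K`), the Petit algebra `S_f` is realised on coefficient vectors
`Fin m → K` (the polynomials of degree `< m`), with multiplication `g ∘ h = (gh) mod_r f`. -/

/-- The remainder of `t^s` after right division by `f(t) = t^m - Σ_{i<m} a_i t^i`:
for `s < m` it is `t^s` itself, and for `s ≥ m` one uses
`t^s ≡ Σ_i σ^{s-m}(a_i) t^{s-m+i} (mod R·f)`. -/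
noncomputable def tred {K : Type*} [Field K] (σ : K → K) (m : ℕ) (a : Fin m → K) (s : ℕ) :
    Fin m → K :=
  if _h : s < m then (fun i => if (i : ℕ) = s then (1 : K) else 0)
  else ∑ i : Fin m, σ^[s - m] (a i) • tred σ m a (s - m + (i : ℕ))
termination_by s
decreasing_by
  have hi := i.isLt
  omega

/-- The multiplication `g ∘ h = (gh) mod_r f` of the Petit algebra `S_f`. -/
noncomputable def pmul {K : Type*} [Field K] (σ : K → K) {m : ℕ} (a : Fin m → K)
    (x y : Fin m → K) : Fin m → K :=
  ∑ i : Fin m, ∑ j : Fin m, (x i * σ^[(i : ℕ)] (y j)) • tred σ m a ((i : ℕ) + (j : ℕ))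

/-- The unit element `1` of `S_f`. -/
noncomputable def pone (K : Type*) [Field K] (m : ℕ) : Fin m → K :=
  fun i => if (i : ℕ) = 0 then 1 else 0

/-- The element `t` of `S_f`. -/
noncomputable def tvec (K : Type*) [Field K] (m : ℕ) : Fin m → K :=
  fun i => if (i : ℕ) = 1 then 1 else 0

/-- The canonical copy of `c ∈ K` inside `S_f`. -/
noncomputable def iota (K : Type*) [Field K] (m : ℕ) (c : K) : Fin m → K :=
  fun i => if (i : ℕ) = 0 then c else 0

/-- `S_f` is associative; by Petit's theorem this holds if and only if `f` is
invariant (i.e. `R·f` is a two-sided ideal of `R = K[t;σ]`). -/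
def PAssoc {K : Type*} [Field K] (σ : K → K) {m : ℕ} (a : Fin m → K) : Prop :=
  ∀ x y z : Fin m → K, pmul σ a (pmul σ a x y) z = pmul σ a x (pmul σ a y z)

/-- `H` is an automorphism of the algebra `S_f` over `F = Fix(σ)`: an `F`-linear
bijection preserving the multiplication and the unit. -/
structure IsPetitAut {K : Type*} [Field K] (σ : K → K) {m : ℕ} (a : Fin m → K)
    (H : (Fin m → K) → (Fin m → K)) : Prop where
  bijective : Function.Bijective H
  map_add : ∀ x y, H (x + y) = H x + H y
  map_smul : ∀ c : K, σ c = c → ∀ x, H (c • x) = c • H x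
  map_mul : ∀ x y, H (pmul σ a x y) = pmul σ a (H x) (H y)
  map_one : H (pone K m) = pone K m

/-- `H` is an inner automorphism `x ↦ (c_l ∘ x) ∘ c` of `S_f`, where `c_l` is a
left inverse of `c`. -/
def IsInnerPetit {K : Type*} [Field K] (σ : K → K) {m : ℕ} (a : Fin m → K)
    (H : (Fin m → K) → (Fin m → K)) : Prop :=
  ∃ c cl : Fin m → K, pmul σ a cl c = pone K m ∧
    ∀ x, H x = pmul σ a (pmul σ a cl x) c

/-- The map `H_{τ,k} : Σ x_i t^i ↦ τ(x_0) + Σ_{i≥1} τ(x_i)·(Π_{l<i} σ^l(k))·t^i`. -/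
noncomputable def Hmap {K : Type*} [Field K] (σ τ : K → K) {m : ℕ} (k : K)
    (x : Fin m → K) : Fin m → K :=
  fun i => τ (x i) * ∏ l ∈ Finset.range (i : ℕ), σ^[l] k

section Aux

variable {K : Type*} [Field K]

lemma iter_mul (σ : K ≃+* K) (l : ℕ) (x y : K) :
    (⇑σ)^[l] (x * y) = (⇑σ)^[l] x * (⇑σ)^[l] y := by
  induction l generalizing x y with
  | zero => rfl
  | succ n ih => simp only [Function.iterate_succ_apply, map_mul, ih]

lemma iter_one (σ : K ≃+* K) (l : ℕ) : (⇑σ)^[l] (1 : K) = 1 := by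
  induction l with
  | zero => rfl
  | succ n ih => simp only [Function.iterate_succ_apply, map_one, ih]

lemma iter_inv (σ : K ≃+* K) (l : ℕ) (x : K) : (⇑σ)^[l] x⁻¹ = ((⇑σ)^[l] x)⁻¹ := by
  induction l generalizing x with
  | zero => rfl
  | succ n ih => simp only [Function.iterate_succ_apply, map_inv₀, ih]

lemma iter_ne_zero (σ : K ≃+* K) (l : ℕ) {x : K} (hx : x ≠ 0) : (⇑σ)^[l] x ≠ 0 := by
  induction l generalizing x with
  | zero => exact hx
  | succ n ih =>
    rw [Function.iterate_succ_apply]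
    exact ih (by simpa using hx)

lemma iter_comm (σ : K ≃+* K) (τ : K → K) (hc : ∀ x, σ (τ x) = τ (σ x)) (l : ℕ) (x : K) :
    (⇑σ)^[l] (τ x) = τ ((⇑σ)^[l] x) := by
  induction l generalizing x with
  | zero => rfl
  | succ n ih => rw [Function.iterate_succ_apply, Function.iterate_succ_apply, hc, ih]

lemma iter_shift (σ : K ≃+* K) (k : K) (i : ℕ) (S : Finset ℕ) :
    (⇑σ)^[i] (∏ l ∈ S, (⇑σ)^[l] k) = ∏ l ∈ S, (⇑σ)^[i + l] k := by
  classical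
  induction S using Finset.induction_on with
  | empty => simp
  | insert h ih => simp_all [iter_mul, Function.iterate_add_apply]

lemma C_split (σ : K ≃+* K) (k : K) {s m i : ℕ} (hs : m ≤ s) (hi : i < m) :
    (∏ l ∈ Finset.Ico i m, (⇑σ)^[s - m + l] k) *
      ∏ l ∈ Finset.range (s - m + i), (⇑σ)^[l] k
      = ∏ l ∈ Finset.range s, (⇑σ)^[l] k := by
  have h1 : (∏ l ∈ Finset.Ico i m, (⇑σ)^[s - m + l] k)
      = ∏ l ∈ Finset.Ico (s - m + i) s, (⇑σ)^[l] k := by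
    rw [Finset.prod_Ico_eq_prod_range, Finset.prod_Ico_eq_prod_range]
    have h2 : s - (s - m + i) = m - i := by omega
    rw [h2]
    refine Finset.prod_congr rfl fun j _ => ?_
    congr 1
    omega
  rw [h1, mul_comm, Finset.range_eq_Ico, Finset.range_eq_Ico]
  exact Finset.prod_Ico_consecutive _ (by omega) (by omega)

lemma C_add (σ : K ≃+* K) (k : K) (i j : ℕ) :
    (∏ l ∈ Finset.range i, (⇑σ)^[l] k) * (⇑σ)^[i] (∏ l ∈ Finset.range j, (⇑σ)^[l] k)
      = ∏ l ∈ Finset.range (i + j), (⇑σ)^[l] k := by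
  rw [iter_shift, Finset.prod_range_add]

lemma tred_twist (σ τ : K ≃+* K) (hc : ∀ x, σ (τ x) = τ (σ x))
    {m : ℕ} (a : Fin m → K) (k : K)
    (hk : ∀ i : Fin m, τ (a i) = (∏ l ∈ Finset.Ico (i : ℕ) m, (⇑σ)^[l] k) * a i)
    (s : ℕ) (p : Fin m) :
    τ (tred ⇑σ m a s p) * ∏ l ∈ Finset.range (p : ℕ), (⇑σ)^[l] k
      = (∏ l ∈ Finset.range s, (⇑σ)^[l] k) * tred ⇑σ m a s p := by
  induction s using Nat.strong_induction_on with
  | _ s ih =>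
    rw [tred.eq_def]
    by_cases h : s < m
    · rw [dif_pos h]
      by_cases hp : (p : ℕ) = s
      · simp [hp]
      · simp [hp]
    · rw [dif_neg h]
      simp only [Finset.sum_apply, Pi.smul_apply, smul_eq_mul, map_sum, Finset.sum_mul,
        Finset.mul_sum]
      refine Finset.sum_congr rfl fun i _ => ?_
      have hlt : s - m + (i : ℕ) < s := by have := i.isLt; omega
      have ht := ih _ hlt
      have h1 : τ ((⇑σ)^[s - m] (a i)) = (⇑σ)^[s - m] (τ (a i)) :=
        (iter_comm σ ⇑τ hc _ _).symm
      have h2 : (⇑σ)^[s - m] (τ (a i))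
          = (∏ l ∈ Finset.Ico (i : ℕ) m, (⇑σ)^[s - m + l] k) * (⇑σ)^[s - m] (a i) := by
        rw [hk i, iter_mul]
        congr 1
        exact iter_shift σ k (s - m) _
      rw [map_mul, mul_assoc, ht, h1, h2]
      linear_combination ((⇑σ)^[s - m] (a i) * tred ⇑σ m a (s - m + (i : ℕ)) p) *
        C_split σ k (not_lt.mp h) i.isLt

lemma Hmap_pmul (σ τ : K ≃+* K) (hc : ∀ x, σ (τ x) = τ (σ x))
    {m : ℕ} (a : Fin m → K) (k : K)
    (hk : ∀ i : Fin m, τ (a i) = (∏ l ∈ Finset.Ico (i : ℕ) m, (⇑σ)^[l] k) * a i)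
    (x y : Fin m → K) :
    Hmap ⇑σ ⇑τ k (pmul ⇑σ a x y) = pmul ⇑σ a (Hmap ⇑σ ⇑τ k x) (Hmap ⇑σ ⇑τ k y) := by
  funext p
  simp only [Hmap, pmul, Finset.sum_apply, Pi.smul_apply, smul_eq_mul, map_sum,
    Finset.sum_mul]
  refine Finset.sum_congr rfl fun i _ => ?_
  refine Finset.sum_congr rfl fun j _ => ?_
  have ht := tred_twist σ τ hc a k hk ((i : ℕ) + (j : ℕ)) p
  have h1 : (⇑σ)^[(i : ℕ)] (τ (y j)) = τ ((⇑σ)^[(i : ℕ)] (y j)) := iter_comm σ ⇑τ hc _ _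
  have h2 := C_add σ k (i : ℕ) (j : ℕ)
  rw [map_mul, map_mul, iter_mul, h1]
  linear_combination
    (τ (x i) * τ ((⇑σ)^[(i : ℕ)] (y j))) * ht
    - (τ (x i) * τ ((⇑σ)^[(i : ℕ)] (y j)) * tred ⇑σ m a ((i : ℕ) + (j : ℕ)) p) * h2

lemma Hmap_comp (σ τ ρ : K ≃+* K) (hc : ∀ x, σ (τ x) = τ (σ x)) {m : ℕ} (k b : K) :
    (Hmap ⇑σ ⇑τ k : (Fin m → K) → Fin m → K) ∘ Hmap ⇑σ ⇑ρ b
      = Hmap ⇑σ (⇑τ ∘ ⇑ρ) (τ b * k) := by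
  funext x i
  simp only [Function.comp_apply, Hmap, map_mul]
  have h1 : τ (∏ l ∈ Finset.range (i : ℕ), (⇑σ)^[l] b)
      = ∏ l ∈ Finset.range (i : ℕ), (⇑σ)^[l] (τ b) := by
    rw [map_prod]
    exact Finset.prod_congr rfl fun l _ => (iter_comm σ ⇑τ hc l b).symm
  have h2 : ∏ l ∈ Finset.range (i : ℕ), (⇑σ)^[l] (τ b * k)
      = (∏ l ∈ Finset.range (i : ℕ), (⇑σ)^[l] (τ b)) *
          ∏ l ∈ Finset.range (i : ℕ), (⇑σ)^[l] k := by
    rw [← Finset.prod_mul_distrib]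
    exact Finset.prod_congr rfl fun l _ => iter_mul σ l _ _
  rw [h1, h2]
  ring

lemma Hmap_id (σ : K ≃+* K) (m : ℕ) :
    (Hmap ⇑σ id (1 : K) : (Fin m → K) → Fin m → K) = id := by
  funext x i
  simp [Hmap, iter_one σ]

lemma symm_comm (σ τ : K ≃+* K) (hc : ∀ x, σ (τ x) = τ (σ x)) (x : K) :
    σ (τ.symm x) = τ.symm (σ x) := by
  apply τ.injective
  rw [← hc, τ.apply_symm_apply, τ.apply_symm_apply]

lemma symm_fix (σ τ : K ≃+* K) (hc : ∀ x, σ (τ x) = τ (σ x))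
    (hF : ∀ c : K, σ c = c → τ c = c) (c : K) (h : σ c = c) : τ.symm c = c := by
  have h1 : σ (τ.symm c) = τ.symm c := by rw [symm_comm σ τ hc, h]
  have h2 := hF _ h1
  rw [τ.apply_symm_apply] at h2
  exact h2.symm

lemma Hmap_inv (σ τ : K ≃+* K) (hc : ∀ x, σ (τ x) = τ (σ x)) {m : ℕ} {k : K} (hk0 : k ≠ 0) :
    ((Hmap ⇑σ ⇑τ k : (Fin m → K) → Fin m → K) ∘ Hmap ⇑σ ⇑τ.symm (τ.symm k⁻¹) = id) ∧
    ((Hmap ⇑σ ⇑τ.symm (τ.symm k⁻¹) : (Fin m → K) → Fin m → K) ∘ Hmap ⇑σ ⇑τ k = id) := by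
  have hcs := symm_comm σ τ hc
  constructor
  · rw [Hmap_comp σ τ τ.symm hc]
    have e1 : (⇑τ ∘ ⇑τ.symm : K → K) = id := by
      funext z; exact τ.apply_symm_apply z
    have e2 : τ (τ.symm k⁻¹) * k = 1 := by
      rw [τ.apply_symm_apply, inv_mul_cancel₀ hk0]
    rw [e1, e2, Hmap_id]
  · rw [Hmap_comp σ τ.symm τ hcs]
    have e1 : (⇑τ.symm ∘ ⇑τ : K → K) = id := by
      funext z; exact τ.symm_apply_apply z
    have e2 : τ.symm k * τ.symm k⁻¹ = 1 := by
      rw [← map_mul, mul_inv_cancel₀ hk0, map_one]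
    rw [e1, e2, Hmap_id]

end Aux

theorem stmt4 {K : Type*} [Field K] (σ : K ≃+* K) (hσ : σ ≠ RingEquiv.refl K)
    (m n : ℕ) (hm : 2 ≤ m) (a : Fin m → K)
    (hn0 : 0 < n) (hord : (⇑σ)^[n] = id)
    (hmin : ∀ j : ℕ, 0 < j → j < n → (⇑σ)^[j] ≠ id)
    (hnm : n < m - 1)
    (hcomm : ∀ τ : K ≃+* K, (∀ c : K, σ c = c → τ c = c) → ∀ x, σ (τ x) = τ (σ x))
    (hna : ¬ PAssoc (⇑σ) a) :
    (∀ τ : K ≃+* K, (∀ c : K, σ c = c → τ c = c) →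
      ∀ k : K, k ≠ 0 →
        (∀ i : Fin m, τ (a i) = (∏ l ∈ Finset.Ico (i : ℕ) m, (⇑σ)^[l] k) * a i) →
        IsPetitAut (⇑σ) a (Hmap (⇑σ) (⇑τ) k))
    ∧ (∀ τ ρ : K ≃+* K, (∀ c : K, σ c = c → τ c = c) → (∀ c : K, σ c = c → ρ c = c) →
        ∀ k b : K, k ≠ 0 → b ≠ 0 →
        (∀ i : Fin m, τ (a i) = (∏ l ∈ Finset.Ico (i : ℕ) m, (⇑σ)^[l] k) * a i) →
        (∀ i : Fin m, ρ (a i) = (∏ l ∈ Finset.Ico (i : ℕ) m, (⇑σ)^[l] b) * a i) →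
        (Hmap (⇑σ) (⇑τ) k : (Fin m → K) → Fin m → K) ∘ Hmap (⇑σ) (⇑ρ) b
          = Hmap (⇑σ) (⇑(ρ.trans τ)) (τ b * k))
    ∧ (∀ τ : K ≃+* K, (∀ c : K, σ c = c → τ c = c) →
        ∀ k : K, k ≠ 0 →
        (∀ i : Fin m, τ (a i) = (∏ l ∈ Finset.Ico (i : ℕ) m, (⇑σ)^[l] k) * a i) →
        (∀ c : K, σ c = c → τ.symm c = c) ∧ (τ.symm k⁻¹ ≠ 0) ∧
        (∀ i : Fin m, τ.symm (a i)
            = (∏ l ∈ Finset.Ico (i : ℕ) m, (⇑σ)^[l] (τ.symm k⁻¹)) * a i) ∧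
        (Hmap (⇑σ) (⇑τ) k : (Fin m → K) → Fin m → K) ∘ Hmap (⇑σ) (⇑τ.symm) (τ.symm k⁻¹)
          = id ∧
        (Hmap (⇑σ) (⇑τ.symm) (τ.symm k⁻¹) : (Fin m → K) → Fin m → K) ∘ Hmap (⇑σ) (⇑τ) k
          = id) := by
  have hmpos : 0 < m := by omega
  -- part (i)
  have part1 : ∀ τ : K ≃+* K, (∀ c : K, σ c = c → τ c = c) →
      ∀ k : K, k ≠ 0 →
        (∀ i : Fin m, τ (a i) = (∏ l ∈ Finset.Ico (i : ℕ) m, (⇑σ)^[l] k) * a i) →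
        IsPetitAut (⇑σ) a (Hmap (⇑σ) (⇑τ) k) := by
    intro τ hF k hk0 hk
    have hc : ∀ x, σ (τ x) = τ (σ x) := hcomm τ hF
    refine ⟨?_, ?_, ?_, ?_, ?_⟩
    · obtain ⟨e1, e2⟩ := Hmap_inv σ τ hc (m := m) hk0
      exact Function.bijective_iff_has_inverse.mpr
        ⟨Hmap ⇑σ ⇑τ.symm (τ.symm k⁻¹), fun x => congrFun e2 x, fun x => congrFun e1 x⟩
    · intro x y
      funext i
      simp [Hmap, map_add, add_mul]
    · intro c hcfix x
      have := hF c hcfix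
      funext i
      simp [Hmap, this, mul_assoc]
    · exact Hmap_pmul σ τ hc a k hk
    · funext i
      by_cases hi : (i : ℕ) = 0
      · simp [Hmap, pone, hi]
      · simp [Hmap, pone, hi]
  refine ⟨part1, ?_, ?_⟩
  · intro τ ρ hFτ hFρ k b hk0 hb0 hk hb
    rw [Hmap_comp σ τ ρ (hcomm τ hFτ), RingEquiv.coe_trans]
  · intro τ hF k hk0 hk
    have hc : ∀ x, σ (τ x) = τ (σ x) := hcomm τ hF
    have hcs := symm_comm σ τ hc
    obtain ⟨e1, e2⟩ := Hmap_inv σ τ hc (m := m) hk0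
    refine ⟨symm_fix σ τ hc hF, ?_, ?_, e1, e2⟩
    · intro h
      apply inv_ne_zero hk0
      have := congrArg τ h
      rwa [τ.apply_symm_apply, map_zero] at this
    · intro i
      have hP : (∏ l ∈ Finset.Ico (i : ℕ) m, (⇑σ)^[l] k) ≠ 0 :=
        Finset.prod_ne_zero_iff.mpr fun l _ => iter_ne_zero σ l hk0
      have hP' : τ.symm (∏ l ∈ Finset.Ico (i : ℕ) m, (⇑σ)^[l] k) ≠ 0 := by
        intro h
        apply hP
        have := congrArg τ h
        rwa [τ.apply_symm_apply, map_zero] at this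
      have ha' : a i = τ.symm (∏ l ∈ Finset.Ico (i : ℕ) m, (⇑σ)^[l] k) * τ.symm (a i) := by
        have := congrArg τ.symm (hk i)
        rwa [τ.symm_apply_apply, map_mul] at this
      have hQ : (∏ l ∈ Finset.Ico (i : ℕ) m, (⇑σ)^[l] (τ.symm k⁻¹))
          = (τ.symm (∏ l ∈ Finset.Ico (i : ℕ) m, (⇑σ)^[l] k))⁻¹ := by
        rw [map_prod, ← Finset.prod_inv_distrib]
        refine Finset.prod_congr rfl fun l _ => ?_
        rw [map_inv₀, iter_inv, iter_comm σ ⇑τ.symm hcs]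
      rw [hQ]
      conv_rhs => rw [ha']
      rw [inv_mul_cancel_left₀ hP']
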